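/- arXiv:1004.2117 — 2 statements merged into one kernel-verified Lean document; each statement's English description precedes it below -/
import Mathlib

section
/- For all integers n, m, l, j ≥ 0, β_{n,m+l}^{↑j} · β_{j,m} = β_{j+n,m} · β_{n,l}^{↑(m+j)} in B_∞. -/
namespace BraidPaper

/-- Relations of the infinite Artin braid group `B_∞`.  The generator with index `n : ℕ`
represents the Artin generator `σ_{n+1}` (so generators are `σ_1, σ_2, …`). -/
def BraidRels : Set (FreeGroup ℕ) :=
  {r | (∃ i : ℕ, r = .of i * .of (i + 1) * .of i * (.of (i + 1) * .of i * .of (i + 1))⁻¹) ∨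
       (∃ i j : ℕ, i + 2 ≤ j ∧ r = .of i * .of j * (.of j * .of i)⁻¹)}

/-- The infinite Artin braid group `B_∞`, presented by generators `σ_1, σ_2, …` and the
braid and far-commutativity relations. -/
abbrev BInf : Type := PresentedGroup BraidRels

/-- The Artin generator `σ i` of `B_∞` (meaningful for `i ≥ 1`). -/
def σ (i : ℕ) : BInf := PresentedGroup.of (i - 1)

lemma rel_eq_one {r : FreeGroup ℕ} (hr : r ∈ BraidRels) : PresentedGroup.mk BraidRels r = 1 := by
  have : r ∈ Subgroup.normalClosure BraidRels := Subgroup.subset_normalClosure hr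
  exact (QuotientGroup.eq_one_iff r).mpr this

lemma gen_braid (i : ℕ) :
    (PresentedGroup.of i : BInf) * .of (i + 1) * .of i = .of (i + 1) * .of i * .of (i + 1) := by
  have h := rel_eq_one (Or.inl ⟨i, rfl⟩)
  rw [map_mul, map_mul, map_mul, map_inv, map_mul, map_mul, mul_inv_eq_one] at h
  exact h

lemma gen_comm {i j : ℕ} (hij : i + 2 ≤ j) :
    (PresentedGroup.of i : BInf) * .of j = .of j * .of i := by
  have h := rel_eq_one (Or.inr ⟨i, j, hij, rfl⟩)
  rw [map_mul, map_mul, map_inv, map_mul, mul_inv_eq_one] at h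
  exact h

/-- The shift endomorphism `↑ℓ : B_∞ → B_∞`, `σ_i ↦ σ_{i+ℓ}`. -/
def shift (l : ℕ) : BInf →* BInf :=
  PresentedGroup.toGroup (f := fun n => (PresentedGroup.of (n + l) : BInf)) (by
    rintro r (⟨i, rfl⟩ | ⟨i, j, hij, rfl⟩) <;>
      simp only [map_mul, map_inv, FreeGroup.lift_apply_of, mul_inv_eq_one]
    · have h1 : i + 1 + l = i + l + 1 := by omega
      rw [h1]; exact gen_braid (i + l)
    · exact gen_comm (by omega : (i + l) + 2 ≤ j + l))

/-- The ascending product `σ_i σ_{i+1} ⋯ σ_{i+l-1}` (of `l` factors). -/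
def asc (i l : ℕ) : BInf := ((List.range l).map fun t => σ (i + t)).prod

/-- The descending product `σ_i σ_{i-1} ⋯ σ_{i-k+1}` (of `k` factors). -/
def desc (i k : ℕ) : BInf := ((List.range k).map fun t => σ (i - t)).prod

/-- The block transposition braid
`β_{k,l} = (σ_k σ_{k+1} ⋯ σ_{k+l-1})(σ_{k-1} σ_k ⋯ σ_{k+l-2}) ⋯ (σ_1 σ_2 ⋯ σ_l)`,
with `β_{k,0} = β_{0,l} = 1`. -/
def β (k l : ℕ) : BInf := ((List.range k).map fun r => asc (k - r) l).prod

/-- The positive (Garside) lift `ω_a = β_{1,1} β_{2,1} ⋯ β_{a-1,1}` of the longest element of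
the symmetric group `S_a`, with `ω_0 = ω_1 = 1`. -/
def ω (a : ℕ) : BInf := ((List.range (a - 1)).map fun t => β (t + 1) 1).prod

/-- The copy of the braid group `B_n` inside `B_∞`: the subgroup generated by
`σ_1, …, σ_{n-1}`. -/
def BSub (n : ℕ) : Subgroup BInf := Subgroup.closure {g | ∃ i, 1 ≤ i ∧ i < n ∧ g = σ i}

lemma sigma_comm {a b : ℕ} (ha : 1 ≤ a) (h : a + 2 ≤ b) : Commute (σ a) (σ b) := by
  unfold σ
  exact (gen_comm (by omega : (a - 1) + 2 ≤ b - 1))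

lemma asc_comm {i l i' l' : ℕ} (hi' : 1 ≤ i') (h : i' + l' + 1 ≤ i) :
    Commute (asc i l) (asc i' l') := by
  unfold asc
  apply Commute.list_prod_right
  intro x hx
  simp only [List.mem_map, List.mem_range] at hx
  obtain ⟨t, ht, rfl⟩ := hx
  apply Commute.list_prod_left
  intro y hy
  simp only [List.mem_map, List.mem_range] at hy
  obtain ⟨s, hs, rfl⟩ := hy
  exact (sigma_comm (by omega) (by omega)).symm

lemma asc_add (i a b : ℕ) : asc i (a + b) = asc i a * asc (i + a) b := by
  unfold asc
  rw [List.range_add, List.map_append, List.prod_append, List.map_map]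
  congr 2
  apply List.map_congr_left
  intro t _
  simp only [Function.comp_apply]
  congr 1
  omega

lemma shift_sigma (j : ℕ) {i : ℕ} (hi : 1 ≤ i) : shift j (σ i) = σ (i + j) := by
  unfold σ shift
  rw [PresentedGroup.toGroup.of]
  congr 1
  omega

lemma shift_asc (j i l : ℕ) (hi : 1 ≤ i) : shift j (asc i l) = asc (i + j) l := by
  unfold asc
  rw [map_list_prod, List.map_map]
  congr 1
  apply List.map_congr_left
  intro t _
  simp only [Function.comp_apply]
  rw [shift_sigma j (by omega)]
  congr 1
  omega

lemma shift_beta (j k X : ℕ) :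
    shift j (β k X) = ((List.range k).map fun r => asc (k - r + j) X).prod := by
  unfold β
  rw [map_list_prod, List.map_map]
  congr 1
  apply List.map_congr_left
  intro r hr
  simp only [List.mem_range] at hr
  simp only [Function.comp_apply]
  exact shift_asc j (k - r) X (by omega)

lemma beta_split (j n m : ℕ) :
    β (j + n) m = ((List.range n).map fun r => asc (n - r + j) m).prod * β j m := by
  unfold β
  have hjn : j + n = n + j := Nat.add_comm j n
  rw [hjn, List.range_add, List.map_append, List.prod_append]
  congr 1
  · congr 1
    apply List.map_congr_left
    intro r hr
    simp only [List.mem_range] at hr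
    congr 1
    omega
  · rw [List.map_map]
    congr 1
    apply List.map_congr_left
    intro r hr
    simp only [List.mem_range] at hr
    simp only [Function.comp_apply]
    congr 1
    omega

lemma prod_succ (c X n : ℕ) :
    ((List.range (n + 1)).map fun r => asc (n + 1 - r + c) X).prod =
      asc (n + 1 + c) X * ((List.range n).map fun r => asc (n - r + c) X).prod := by
  rw [List.range_succ_eq_map, List.map_cons, List.prod_cons, List.map_map]
  congr 2
  apply List.map_congr_left
  intro r hr
  simp only [List.mem_range] at hr
  simp only [Function.comp_apply]
  congr 1
  omega

lemma interleave (j m l : ℕ) : ∀ n : ℕ,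
    ((List.range n).map fun r => asc (n - r + j) (m + l)).prod =
      ((List.range n).map fun r => asc (n - r + j) m).prod *
        ((List.range n).map fun r => asc (n - r + (j + m)) l).prod := by
  intro n
  induction n with
  | zero => simp
  | succ n ih =>
    rw [prod_succ j (m + l) n, prod_succ j m n, prod_succ (j + m) l n, ih, asc_add]
    have harr : n + 1 + j + m = n + 1 + (j + m) := by omega
    rw [harr]
    have hc : Commute (asc (n + 1 + (j + m)) l)
        (((List.range n).map fun r => asc (n - r + j) m).prod) := by
      apply Commute.list_prod_right
      intro x hx
      simp only [List.mem_map, List.mem_range] at hx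
      obtain ⟨r, hr, rfl⟩ := hx
      exact asc_comm (by omega) (by omega)
    rw [mul_assoc (asc (n + 1 + j) m), ← mul_assoc (asc (n + 1 + (j + m)) l), hc.eq]
    group

lemma beta_comm_shifted (j m : ℕ) {L : List BInf}
    (hL : ∀ x ∈ L, ∃ i l, j + m + 1 ≤ i ∧ x = asc i l) : Commute (β j m) L.prod := by
  apply Commute.list_prod_right
  intro x hx
  obtain ⟨i, l, hi, rfl⟩ := hL x hx
  unfold β
  apply (Commute.list_prod_left _ _ ?_)
  intro y hy
  simp only [List.mem_map, List.mem_range] at hy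
  obtain ⟨r, hr, rfl⟩ := hy
  exact (asc_comm (i := i) (l := l) (i' := j - r) (l' := m) (by omega) (by omega)).symm

/-- `β_{n,m+l}^{↑j} · β_{j,m} = β_{j+n,m} · β_{n,l}^{↑(m+j)}` in `B_∞`. -/
theorem beta_exchange' (n m l j : ℕ) :
    shift j (β n (m + l)) * β j m = β (j + n) m * shift (m + j) (β n l) := by
  rw [shift_beta, shift_beta, beta_split, interleave j m l n]
  have hmj : m + j = j + m := Nat.add_comm m j
  rw [hmj]
  have hc : Commute (β j m) (((List.range n).map fun r => asc (n - r + (j + m)) l).prod) := by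
    apply beta_comm_shifted
    intro x hx
    simp only [List.mem_map, List.mem_range] at hx
    obtain ⟨r, hr, rfl⟩ := hx
    exact ⟨n - r + (j + m), l, by omega, rfl⟩
  rw [mul_assoc, ← hc.eq, ← mul_assoc]

end BraidPaper
end

section
/- The braid shuffle elements Ш_{m,n} (defined by the recursion Ш_{m,n} = Ш_{m−1,n} + Ш_{m,n−1} β_{m,1}^{↑(n−1)} with initial condition Ш_{n,−n} = δ_{n,0}) also satisfy the second Pascal-type recursion Ш_{m,n} = Ш_{m,n−1}^{↑1} + Ш_{m−1,n}^{↑1} β_{1,n} for all integers m, n with m + n ≥ 1; that is, the two Pascal-type recurrences produce the same family of shuffle elements. -/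
namespace BraidPaper

-- new lemmas
lemma shift_of (l n : ℕ) : shift l (PresentedGroup.of n) = PresentedGroup.of (n + l) :=
  PresentedGroup.toGroup.of _

lemma shift_σ (l : ℕ) {i : ℕ} (h : 1 ≤ i) : shift l (σ i) = σ (i + l) := by
  unfold σ
  rw [shift_of]
  congr 1
  omega

lemma shift_shift (a b : ℕ) (g : BInf) : shift a (shift b g) = shift (a + b) g := by
  have : ((shift a).comp (shift b)) g = shift (a + b) g := by
    refine PresentedGroup.toGroup.unique _ _ (fun x => ?_)
    simp only [MonoidHom.comp_apply, shift_of]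
    congr 1
    omega
  simpa using this

lemma σ_comm {i j : ℕ} (h1 : 1 ≤ i) (h : i + 2 ≤ j) : σ i * σ j = σ j * σ i := by
  unfold σ
  exact gen_comm (by omega)

lemma asc_one (i : ℕ) : asc i 1 = σ i := by
  show (List.map (fun t => σ (i + t)) [0]).prod = σ i
  simp

lemma asc1_succ (b : ℕ) : asc 1 (b + 1) = asc 1 b * σ (b + 1) := by
  simp [asc, List.range_succ, Nat.add_comm]

lemma β_succ_one (k : ℕ) : β (k + 1) 1 = σ (k + 1) * β k 1 := by
  simp only [β, List.range_succ_eq_map, List.map_cons, List.map_map, List.prod_cons]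
  have h2 : ((fun r => asc (k + 1 - r) 1) ∘ Nat.succ) = fun r => asc (k - r) 1 := by
    funext r; simp [Nat.succ_sub_succ]
  rw [h2, asc_one]
  norm_num

lemma β_zero_one : β 0 1 = 1 := by simp [β]

lemma β_one (l : ℕ) : β 1 l = asc 1 l := by
  show (List.map (fun r => asc (1 - r) l) [0]).prod = asc 1 l
  norm_num

lemma asc1_comm_σ (b : ℕ) {j : ℕ} (h : b + 2 ≤ j) : asc 1 b * σ j = σ j * asc 1 b := by
  induction b with
  | zero => simp [asc]
  | succ b ih =>
    rw [asc1_succ, mul_assoc, σ_comm (by omega) (by omega : b + 1 + 2 ≤ j), ← mul_assoc,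
      ih (by omega), mul_assoc]

lemma asc1_comm_shiftβ (b c : ℕ) :
    asc 1 b * shift (b + 1) (β c 1) = shift (b + 1) (β c 1) * asc 1 b := by
  induction c with
  | zero => simp [β_zero_one]
  | succ c ih =>
    rw [β_succ_one, map_mul, shift_σ _ (by omega), ← mul_assoc,
      asc1_comm_σ b (by omega : b + 2 ≤ c + 1 + (b + 1)), mul_assoc, ih, ← mul_assoc]

lemma shift_β_succ (b c : ℕ) : shift b (β (c + 1) 1) = shift (b + 1) (β c 1) * σ (b + 1) := by
  induction c with
  | zero =>
    rw [β_succ_one, β_zero_one, mul_one, map_one, one_mul, shift_σ _ (by omega)]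
    rw [Nat.add_comm]
  | succ c ih =>
    rw [β_succ_one, map_mul, ih, shift_σ _ (by omega), ← mul_assoc]
    congr 1
    rw [β_succ_one, map_mul, shift_σ _ (by omega)]
    congr 2
    omega

/-- The key braid identity `β_{1,b} β_{c+1,1}^{↑b} = β_{c,1}^{↑(b+1)} β_{1,b+1}`. -/
lemma braidB (b c : ℕ) :
    asc 1 b * shift b (β (c + 1) 1) = shift (b + 1) (β c 1) * asc 1 (b + 1) := by
  rw [shift_β_succ, ← mul_assoc, asc1_comm_shiftβ, mul_assoc, ← asc1_succ]

variable (𝕜 : Type) [CommRing 𝕜]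

/-- The canonical embedding of `B_∞` into its group algebra `𝕜B_∞`. -/
noncomputable def ι (g : BInf) : MonoidAlgebra 𝕜 BInf := MonoidAlgebra.of 𝕜 BInf g

/-- The shift `↑ℓ` extended (as an algebra homomorphism) to the group algebra `𝕜B_∞`. -/
noncomputable def shiftA (l : ℕ) : MonoidAlgebra 𝕜 BInf →ₐ[𝕜] MonoidAlgebra 𝕜 BInf :=
  MonoidAlgebra.mapDomainAlgHom 𝕜 𝕜 (shift l)

/-- The braid shuffle elements `Ш_{m,n} ∈ 𝕜B_∞` (for natural `m, n`), determined by
`Ш_{0,n} = Ш_{m,0} = 1` and the Pascal-type recursion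
`Ш_{m,n} = Ш_{m-1,n} + Ш_{m,n-1} β_{m,1}^{↑(n-1)}`. -/
noncomputable def Sh : ℕ → ℕ → MonoidAlgebra 𝕜 BInf
  | 0, _ => 1
  | _ + 1, 0 => 1
  | m + 1, n + 1 => Sh m (n + 1) + Sh (m + 1) n * ι 𝕜 (shift n (β (m + 1) 1))
  termination_by m n => (m, n)

/-- The braid shuffle elements `Ш_{m,n} ∈ 𝕜B_∞` for integer indices: `Ш_{m,n} = 0` whenever
`m < 0` or `n < 0`. -/
noncomputable def ShZ (m n : ℤ) : MonoidAlgebra 𝕜 BInf :=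
  if 0 ≤ m ∧ 0 ≤ n then Sh 𝕜 m.toNat n.toNat else 0

/-- The braid Pochhammer symbol
`P_{k,n}(x,y) = (x - β_{k,1} y)(x - β_{k+1,1} y) ⋯ (x - β_{k+n-1,1} y) ∈ 𝕜B_∞`. -/
noncomputable def Poch (k n : ℕ) (x y : 𝕜) : MonoidAlgebra 𝕜 BInf :=
  ((List.range n).map fun t =>
    algebraMap 𝕜 (MonoidAlgebra 𝕜 BInf) x - algebraMap 𝕜 (MonoidAlgebra 𝕜 BInf) y * ι 𝕜 (β (k + t) 1)).prod

-- algebra lemmas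
lemma ι_one : ι 𝕜 1 = 1 := rfl

lemma ι_mul (g h : BInf) : ι 𝕜 (g * h) = ι 𝕜 g * ι 𝕜 h := map_mul (MonoidAlgebra.of 𝕜 BInf) g h

lemma shiftA_ι (l : ℕ) (g : BInf) : shiftA 𝕜 l (ι 𝕜 g) = ι 𝕜 (shift l g) := by
  simp [shiftA, ι, MonoidAlgebra.mapDomainAlgHom, MonoidAlgebra.of_apply,
    Finsupp.mapDomain_single]

lemma Sh_zero_left (n : ℕ) : Sh 𝕜 0 n = 1 := by rw [Sh]

lemma Sh_succ_zero (m : ℕ) : Sh 𝕜 (m + 1) 0 = 1 := by rw [Sh]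

lemma Sh_succ_succ (m n : ℕ) :
    Sh 𝕜 (m + 1) (n + 1) = Sh 𝕜 m (n + 1) + Sh 𝕜 (m + 1) n * ι 𝕜 (shift n (β (m + 1) 1)) := by
  rw [Sh]

lemma ShZ_nonneg (m n : ℤ) (hm : 0 ≤ m) (hn : 0 ≤ n) : ShZ 𝕜 m n = Sh 𝕜 m.toNat n.toNat := by
  rw [ShZ, if_pos ⟨hm, hn⟩]

lemma ShZ_neg_left {m : ℤ} (n : ℤ) (hm : m < 0) : ShZ 𝕜 m n = 0 := by
  rw [ShZ, if_neg]; omega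

lemma ShZ_neg_right (m : ℤ) {n : ℤ} (hn : n < 0) : ShZ 𝕜 m n = 0 := by
  rw [ShZ, if_neg]; omega

/-- The first recursion, in `ℤ` form. -/
lemma rec1 (m n : ℤ) (h : 1 ≤ m + n) :
    ShZ 𝕜 m n = ShZ 𝕜 (m - 1) n + ShZ 𝕜 m (n - 1) * ι 𝕜 (shift (n - 1).toNat (β m.toNat 1)) := by
  rcases lt_trichotomy m 0 with hm | hm | hm
  · rw [ShZ_neg_left _ _ hm, ShZ_neg_left _ _ (by omega), ShZ_neg_left _ _ hm, zero_mul, add_zero]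
  · subst hm
    have hn : 1 ≤ n := by omega
    rw [ShZ_neg_left _ _ (by omega : (0:ℤ) - 1 < 0), ShZ_nonneg _ _ _ le_rfl (by omega),
      ShZ_nonneg _ _ _ le_rfl (by omega), Int.toNat_zero, Sh_zero_left, Sh_zero_left,
      β_zero_one, map_one, ι_one, mul_one, zero_add]
  · rcases lt_trichotomy n 0 with hn | hn | hn
    · rw [ShZ_neg_right _ _ hn, ShZ_neg_right _ _ hn, ShZ_neg_right _ _ (by omega), zero_mul,
        add_zero]
    · subst hn
      rw [ShZ_nonneg _ _ _ (by omega) le_rfl, ShZ_nonneg _ _ _ (by omega) le_rfl,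
        ShZ_neg_right _ _ (by omega : (0:ℤ) - 1 < 0), zero_mul, add_zero, Int.toNat_zero]
      obtain ⟨a, ha⟩ : ∃ a : ℕ, m.toNat = a + 1 := ⟨m.toNat - 1, by omega⟩
      obtain ⟨b, hb⟩ : ∃ b : ℕ, (m - 1).toNat = b := ⟨_, rfl⟩
      rw [ha, Sh_succ_zero]
      rcases Nat.eq_zero_or_pos (m - 1).toNat with h0 | h0
      · rw [h0, Sh_zero_left]
      · obtain ⟨c, hc⟩ : ∃ c : ℕ, (m - 1).toNat = c + 1 := ⟨(m - 1).toNat - 1, by omega⟩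
        rw [hc, Sh_succ_zero]
    · obtain ⟨a, ha⟩ : ∃ a : ℕ, m.toNat = a + 1 := ⟨m.toNat - 1, by omega⟩
      obtain ⟨b, hb⟩ : ∃ b : ℕ, n.toNat = b + 1 := ⟨n.toNat - 1, by omega⟩
      have h1 : (m - 1).toNat = a := by omega
      have h2 : (n - 1).toNat = b := by omega
      rw [ShZ_nonneg _ _ _ (by omega) (by omega), ShZ_nonneg _ _ _ (by omega) (by omega),
        ShZ_nonneg _ _ _ (by omega) (by omega), ha, hb, h1, h2, Sh_succ_succ]

lemma β_one_zero : β 1 0 = 1 := by rw [β_one]; simp [asc]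

lemma Sh_zero_right (a : ℕ) : Sh 𝕜 a 0 = 1 := by
  cases a with
  | zero => exact Sh_zero_left 𝕜 0
  | succ a => exact Sh_succ_zero 𝕜 a

lemma easy (m n : ℤ) (h : 1 ≤ m + n) (h2 : m ≤ 0 ∨ n ≤ 0) :
    ShZ 𝕜 m n = shiftA 𝕜 1 (ShZ 𝕜 m (n - 1)) + shiftA 𝕜 1 (ShZ 𝕜 (m - 1) n) * ι 𝕜 (β 1 n.toNat) := by
  rcases lt_trichotomy m 0 with hm | hm | hm
  · rw [ShZ_neg_left _ _ hm, ShZ_neg_left _ _ hm, ShZ_neg_left _ _ (by omega : m - 1 < 0)]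
    simp
  · subst hm
    rw [ShZ_neg_left _ _ (by omega : (0:ℤ) - 1 < 0), ShZ_nonneg _ _ _ le_rfl (by omega),
      ShZ_nonneg _ _ _ le_rfl (by omega), Int.toNat_zero, Sh_zero_left, Sh_zero_left]
    simp
  · have hn : n ≤ 0 := by omega
    rcases lt_trichotomy n 0 with hn' | hn' | hn'
    · rw [ShZ_neg_right _ _ hn', ShZ_neg_right _ _ hn', ShZ_neg_right _ _ (by omega : n - 1 < 0)]
      simp
    · subst hn'
      rw [ShZ_neg_right _ _ (by omega : (0:ℤ) - 1 < 0), ShZ_nonneg _ _ _ (by omega) le_rfl,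
        ShZ_nonneg _ _ _ (by omega) le_rfl, Int.toNat_zero, Sh_zero_right, Sh_zero_right,
        β_one_zero, ι_one]
      simp
    · omega

lemma aux : ∀ (k : ℕ) (m n : ℤ), m + n = k + 1 →
    ShZ 𝕜 m n = shiftA 𝕜 1 (ShZ 𝕜 m (n - 1)) + shiftA 𝕜 1 (ShZ 𝕜 (m - 1) n) * ι 𝕜 (β 1 n.toNat) := by
  intro k
  induction k with
  | zero =>
    intro m n hmn
    exact easy 𝕜 m n (by omega) (by omega)
  | succ k ih =>
    intro m n hmn
    by_cases hez : m ≤ 0 ∨ n ≤ 0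
    · exact easy 𝕜 m n (by omega) hez
    push_neg at hez
    obtain ⟨hm, hn⟩ := hez
    obtain ⟨c, hc⟩ : ∃ c : ℕ, m.toNat = c + 1 := ⟨m.toNat - 1, by omega⟩
    obtain ⟨b, hb⟩ : ∃ b : ℕ, n.toNat = b + 1 := ⟨n.toNat - 1, by omega⟩
    have hmc : (m - 1).toNat = c := by omega
    have hnb : (n - 1).toNat = b := by omega
    have e1 := rec1 𝕜 m n (by omega)
    have e2 := rec1 𝕜 m (n - 1) (by omega)
    have e3 := rec1 𝕜 (m - 1) n (by omega)
    have i1 := ih m (n - 1) (by omega)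
    have i2 := ih (m - 1) n (by omega)
    rw [e2, e3, e1, i1, i2]
    simp only [map_add, map_mul, shiftA_ι, shift_shift, hc, hb, hmc, hnb, add_mul, mul_assoc]
    have key : ι 𝕜 (β 1 b) * ι 𝕜 (shift b (β (c + 1) 1))
        = ι 𝕜 (shift (1 + b) (β c 1)) * ι 𝕜 (β 1 (b + 1)) := by
      rw [← ι_mul, ← ι_mul, Nat.add_comm 1 b, β_one, β_one, braidB]
    rw [key]
    rcases eq_or_lt_of_le (by omega : (1:ℤ) ≤ n) with h1 | h1
    · have hz : ShZ 𝕜 m (n - 1 - 1) = 0 := ShZ_neg_right _ _ (by omega)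
      rw [hz]
      simp only [map_zero, zero_mul]
      abel
    · have hd : (1 + (n - 1 - 1).toNat) = b := by omega
      rw [hd]
      abel


/-- the shuffle elements also satisfy the second Pascal-type recursion
`Ш_{m,n} = Ш_{m,n-1}^{↑1} + Ш_{m-1,n}^{↑1} β_{1,n}` for all integers `m, n` with `m + n ≥ 1`. -/
theorem shuffle_second_recursion (m n : ℤ) (h : 1 ≤ m + n) :
    ShZ 𝕜 m n = shiftA 𝕜 1 (ShZ 𝕜 m (n - 1)) + shiftA 𝕜 1 (ShZ 𝕜 (m - 1) n) * ι 𝕜 (β 1 n.toNat) := by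
  exact aux 𝕜 (m + n - 1).toNat m n (by omega)

end BraidPaper
end
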